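/- Let 0 < p, q < 1, β₁ > β₂ > 0, γ₁ > γ₂ > 0. If p·β₁e^{-β₁t} + (1-p)·β₂e^{-β₂t} = q·γ₁e^{-γ₁t} + (1-q)·γ₂e^{-γ₂t} for all t ≥ 0, then p = q, β₁ = γ₁, and β₂ = γ₂. -/
import Mathlib

open Filter Real Topology

lemma exp_mul_tendsto_zero {a : ℝ} (ha : a < 0) :
    Tendsto (fun t : ℝ => Real.exp (a * t)) atTop (nhds 0) := by
  have h1 : Tendsto (fun t : ℝ => a * t) atTop atBot :=
    Tendsto.const_mul_atTop_of_neg ha tendsto_id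
  exact Real.tendsto_exp_atBot.comp h1

lemma limit_four (A B C D a b c : ℝ) (ha : a < 0) (hb : b < 0) (hc : c < 0)
    (h : ∀ t : ℝ, 0 ≤ t →
      A * Real.exp (a * t) + B * Real.exp (b * t) + C * Real.exp (c * t) + D = 0) :
    D = 0 := by
  have h1 : Tendsto (fun t : ℝ =>
      A * Real.exp (a * t) + B * Real.exp (b * t) + C * Real.exp (c * t) + D)
      atTop (nhds (A * 0 + B * 0 + C * 0 + D)) := by
    exact ((((exp_mul_tendsto_zero ha).const_mul A).add
      ((exp_mul_tendsto_zero hb).const_mul B)).add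
      ((exp_mul_tendsto_zero hc).const_mul C)).add tendsto_const_nhds
  have h2 : Tendsto (fun t : ℝ =>
      A * Real.exp (a * t) + B * Real.exp (b * t) + C * Real.exp (c * t) + D)
      atTop (nhds 0) := by
    refine Tendsto.congr' ?_ tendsto_const_nhds
    filter_upwards [eventually_ge_atTop (0:ℝ)] with t ht
    exact (h t ht).symm
  have := tendsto_nhds_unique h1 h2
  linarith

lemma exp_comb (u v t : ℝ) :
    Real.exp (-u * t) * Real.exp (v * t) = Real.exp ((v - u) * t) := by
  rw [← Real.exp_add]; ring_nf

-- main asymptotic step: the smallest rate on the left is ≥ the one on the right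
lemma rate_le
    (p q β₁ β₂ γ₁ γ₂ : ℝ)
    (hp : 0 < p) (hp' : p < 1) (hq : 0 < q) (hq' : q < 1)
    (hβ₂ : 0 < β₂) (hβ : β₂ < β₁) (hγ₂ : 0 < γ₂) (hγ : γ₂ < γ₁)
    (h : ∀ t : ℝ, 0 ≤ t →
      p * (β₁ * Real.exp (-β₁ * t)) + (1 - p) * (β₂ * Real.exp (-β₂ * t))
        = q * (γ₁ * Real.exp (-γ₁ * t)) + (1 - q) * (γ₂ * Real.exp (-γ₂ * t))) :
    γ₂ ≤ β₂ := by
  by_contra hlt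
  push_neg at hlt
  have hD : (1 - p) * β₂ = 0 := by
    apply limit_four (p * β₁) (-(q * γ₁)) (-((1 - q) * γ₂))
      ((1 - p) * β₂) (β₂ - β₁) (β₂ - γ₁) (β₂ - γ₂)
      (by linarith) (by linarith) (by linarith)
    intro t ht
    have ht' := h t ht
    have e1 := exp_comb β₁ β₂ t
    have e2 := exp_comb β₂ β₂ t
    have e3 := exp_comb γ₁ β₂ t
    have e4 := exp_comb γ₂ β₂ t
    have e0 : Real.exp ((β₂ - β₂) * t) = 1 := by
      rw [show (β₂ - β₂) * t = 0 by ring, Real.exp_zero]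
    rw [e0] at e2
    linear_combination Real.exp (β₂ * t) * ht' - p * β₁ * e1 -
      (1 - p) * β₂ * e2 + q * γ₁ * e3 + (1 - q) * γ₂ * e4
  nlinarith

theorem exp_mixture_identifiable
    (p q β₁ β₂ γ₁ γ₂ : ℝ)
    (hp : 0 < p) (hp' : p < 1) (hq : 0 < q) (hq' : q < 1)
    (hβ₂ : 0 < β₂) (hβ : β₂ < β₁) (hγ₂ : 0 < γ₂) (hγ : γ₂ < γ₁)
    (h : ∀ t : ℝ, 0 ≤ t →
      p * (β₁ * Real.exp (-β₁ * t)) + (1 - p) * (β₂ * Real.exp (-β₂ * t))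
        = q * (γ₁ * Real.exp (-γ₁ * t)) + (1 - q) * (γ₂ * Real.exp (-γ₂ * t))) :
    p = q ∧ β₁ = γ₁ ∧ β₂ = γ₂ := by
  have h1 : γ₂ ≤ β₂ := rate_le p q β₁ β₂ γ₁ γ₂ hp hp' hq hq' hβ₂ hβ hγ₂ hγ h
  have h2 : β₂ ≤ γ₂ := by
    apply rate_le q p γ₁ γ₂ β₁ β₂ hq hq' hp hp' hγ₂ hγ hβ₂ hβ
    intro t ht; exact (h t ht).symm
  have hbg : β₂ = γ₂ := le_antisymm h2 h1
  subst hbg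
  -- now show p = q via the limit argument
  have hpq : p = q := by
    have hD : (q - p) * β₂ = 0 := by
      apply limit_four (p * β₁) (-(q * γ₁)) 0
        ((q - p) * β₂) (β₂ - β₁) (β₂ - γ₁) (-1)
        (by linarith) (by linarith) (by linarith)
      intro t ht
      have ht' := h t ht
      have e1 := exp_comb β₁ β₂ t
      have e3 := exp_comb γ₁ β₂ t
      have e2 := exp_comb β₂ β₂ t
      have e0 : Real.exp ((β₂ - β₂) * t) = 1 := by
        rw [show (β₂ - β₂) * t = 0 by ring, Real.exp_zero]
      rw [e0] at e2
      linear_combination Real.exp (β₂ * t) * ht' - p * β₁ * e1 +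
        q * γ₁ * e3 - (q - p) * β₂ * e2
    have : q - p = 0 := by
      rcases mul_eq_zero.1 hD with h' | h'
      · exact h'
      · linarith
    linarith
  subst hpq
  refine ⟨rfl, ?_, rfl⟩
  have h0 := h 0 le_rfl
  simp [Real.exp_zero] at h0
  rcases h0 with h0 | h0
  · exact h0
  · linarith
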